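/- Let f: ℝ^d → ℝ be L₀-Lipschitz. For any fixed points x_t, x_{t-1} ∈ ℝ^d and independent standard Gaussians u_t, u_{t-1} in ℝ^d (with u_t independent of x_t - x_{t-1}), the residual estimator g̃ = (u_t/δ)(f(x_t + δu_t) - f(x_{t-1} + δu_{t-1})) satisfies E[‖g̃‖²] ≤ (2d L₀²/δ²) E[‖x_t - x_{t-1}‖²] + 8 L₀² (d+4)². -/

import Mathlib

open MeasureTheory ProbabilityTheory Real
open scoped ENNReal NNReal


lemma intGaussPow (n : ℕ) : Integrable (fun x : ℝ => x ^ n * Real.exp (-x^2/2)) := by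
  have h := integrable_rpow_mul_exp_neg_mul_sq (b := (1:ℝ)/2) (by norm_num)
    (s := (n:ℝ)) ((by norm_num : (-1:ℝ) < 0).trans_le (Nat.cast_nonneg n))
  have e : ∀ x : ℝ, x ^ (n:ℝ) * Real.exp (-(1/2) * x ^ 2) = x ^ n * Real.exp (-x^2/2) := by
    intro x
    rw [Real.rpow_natCast]
    ring_nf
  simp only [e] at h
  exact h

lemma gaussDeriv (x : ℝ) : HasDerivAt (fun x : ℝ => Real.exp (-x^2/2))
    (Real.exp (-x^2/2) * (-x)) x := by
  have hu : HasDerivAt (fun x : ℝ => -x^2/2) (-x) x := by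
    have := (hasDerivAt_pow 2 x).neg.div_const 2
    refine this.congr_deriv ?_
    norm_num
    ring
  exact hu.exp

lemma ibpGauss (k : ℕ) :
    ∫ x : ℝ, x ^ (k+2) * Real.exp (-x^2/2) = (k+1) * ∫ x : ℝ, x ^ k * Real.exp (-x^2/2) := by
  have hderiv : ∀ x : ℝ, HasDerivAt (fun x => -(x^(k+1) * Real.exp (-x^2/2)))
      (x ^ (k+2) * Real.exp (-x^2/2) - (k+1) * (x ^ k * Real.exp (-x^2/2))) x := by
    intro x
    have h1 : HasDerivAt (fun x : ℝ => x ^ (k+1)) ((k+1) * x ^ k) x := by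
      simpa using hasDerivAt_pow (k+1) x
    have := (h1.mul (gaussDeriv x)).neg
    refine this.congr_deriv ?_
    push_cast
    ring_nf
  have hint : ∀ m : ℕ, Integrable (fun x : ℝ => x ^ m * Real.exp (-x^2/2)) := intGaussPow
  have h0 : ∫ x : ℝ, (x ^ (k+2) * Real.exp (-x^2/2) - (k+1) * (x ^ k * Real.exp (-x^2/2))) = 0 :=
    integral_eq_zero_of_hasDerivAt_of_integrable hderiv
      ((hint (k+2)).sub ((hint k).const_mul _)) ((hint (k+1)).neg)
  rw [integral_sub (hint (k+2)) ((hint k).const_mul _)] at h0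
  rw [integral_const_mul] at h0
  linarith

lemma gauss0 : ∫ x : ℝ, Real.exp (-x^2/2) = Real.sqrt (2 * π) := by
  have h := integral_gaussian (1/2)
  have e : ∀ x : ℝ, -(1/2:ℝ) * x ^ 2 = -x^2/2 := fun x => by ring
  simp only [e] at h
  rw [h, show π / (1/2:ℝ) = 2 * π by ring]

lemma gauss1 : ∫ x : ℝ, x * Real.exp (-x^2/2) = 0 := by
  have hderiv : ∀ x : ℝ, HasDerivAt (fun x : ℝ => -Real.exp (-x^2/2))
      (x * Real.exp (-x^2/2)) x := by
    intro x
    have := (gaussDeriv x).neg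
    refine this.congr_deriv ?_
    ring
  have h1 : Integrable (fun x : ℝ => x * Real.exp (-x^2/2)) := by
    have := intGaussPow 1
    simpa using this
  have h0 : Integrable (fun x : ℝ => -Real.exp (-x^2/2)) := by
    have := (intGaussPow 0).neg
    simp only [pow_zero, one_mul] at this
    exact this
  exact integral_eq_zero_of_hasDerivAt_of_integrable hderiv h1 h0

lemma gauss2 : ∫ x : ℝ, x ^ 2 * Real.exp (-x^2/2) = Real.sqrt (2 * π) := by
  have := ibpGauss 0
  simpa [gauss0] using this

lemma gauss4 : ∫ x : ℝ, x ^ 4 * Real.exp (-x^2/2) = 3 * Real.sqrt (2 * π) := by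
  have := ibpGauss 2
  rw [gauss2] at this
  push_cast at this
  linarith



lemma grDensity : gaussianReal 0 1 =
    volume.withDensity (fun x => ENNReal.ofReal ((Real.sqrt (2*π))⁻¹ * Real.exp (-x^2/2))) := by
  rw [gaussianReal_of_var_ne_zero 0 one_ne_zero]
  congr 1
  funext x
  rw [gaussianPDF_def, gaussianPDFReal_def]
  norm_num

lemma grIntegralEq (g : ℝ → ℝ) :
    ∫ x, g x ∂(gaussianReal 0 1)
      = ∫ x : ℝ, (Real.sqrt (2*π))⁻¹ * Real.exp (-x^2/2) * g x := by
  rw [grDensity]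
  have hmeas : Measurable fun x : ℝ => ((Real.sqrt (2*π))⁻¹ * Real.exp (-x^2/2)).toNNReal := by
    fun_prop
  have h := integral_withDensity_eq_integral_smul (μ := volume) hmeas g
  have hd : (fun x : ℝ => ENNReal.ofReal ((Real.sqrt (2*π))⁻¹ * Real.exp (-x^2/2)))
      = fun x : ℝ => (((Real.sqrt (2*π))⁻¹ * Real.exp (-x^2/2)).toNNReal : ℝ≥0∞) := rfl
  rw [hd, h]
  congr 1
  funext x
  rw [NNReal.smul_def, smul_eq_mul, Real.coe_toNNReal _ (by positivity)]

lemma grIntegrable (g : ℝ → ℝ)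
    (hg : Integrable (fun x : ℝ => g x * Real.exp (-x^2/2))) :
    Integrable g (gaussianReal 0 1) := by
  rw [grDensity]
  have hmeas : Measurable fun x : ℝ => ((Real.sqrt (2*π))⁻¹ * Real.exp (-x^2/2)).toNNReal := by
    fun_prop
  have hd : (fun x : ℝ => ENNReal.ofReal ((Real.sqrt (2*π))⁻¹ * Real.exp (-x^2/2)))
      = fun x : ℝ => (((Real.sqrt (2*π))⁻¹ * Real.exp (-x^2/2)).toNNReal : ℝ≥0∞) := rfl
  rw [hd, integrable_withDensity_iff_integrable_smul hmeas]
  have : (fun x : ℝ => (((Real.sqrt (2*π))⁻¹ * Real.exp (-x^2/2)).toNNReal : ℝ≥0) • g x)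
      = fun x : ℝ => (Real.sqrt (2*π))⁻¹ * (g x * Real.exp (-x^2/2)) := by
    funext x
    rw [NNReal.smul_def, smul_eq_mul, Real.coe_toNNReal _ (by positivity)]
    ring
  rw [this]
  exact hg.const_mul _

lemma grIntPow (n : ℕ) : Integrable (fun x : ℝ => x ^ n) (gaussianReal 0 1) :=
  grIntegrable _ (intGaussPow n)

lemma sqrt2pi_pos : 0 < Real.sqrt (2*π) := Real.sqrt_pos.2 (by positivity)

lemma grM1 : ∫ x, x ∂(gaussianReal 0 1) = 0 := by
  rw [grIntegralEq]
  have : ∀ x : ℝ, (Real.sqrt (2*π))⁻¹ * Real.exp (-x^2/2) * x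
      = (Real.sqrt (2*π))⁻¹ * (x * Real.exp (-x^2/2)) := fun x => by ring
  simp only [this]
  rw [integral_const_mul, gauss1, mul_zero]

lemma grM2 : ∫ x, x ^ 2 ∂(gaussianReal 0 1) = 1 := by
  rw [grIntegralEq]
  have : ∀ x : ℝ, (Real.sqrt (2*π))⁻¹ * Real.exp (-x^2/2) * x ^ 2
      = (Real.sqrt (2*π))⁻¹ * (x ^ 2 * Real.exp (-x^2/2)) := fun x => by ring
  simp only [this]
  rw [integral_const_mul, gauss2, inv_mul_cancel₀ sqrt2pi_pos.ne']

lemma grM4 : ∫ x, x ^ 4 ∂(gaussianReal 0 1) = 3 := by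
  rw [grIntegralEq]
  have : ∀ x : ℝ, (Real.sqrt (2*π))⁻¹ * Real.exp (-x^2/2) * x ^ 4
      = (Real.sqrt (2*π))⁻¹ * (x ^ 4 * Real.exp (-x^2/2)) := fun x => by ring
  simp only [this]
  rw [integral_const_mul, gauss4, ← mul_assoc, mul_comm _ (3:ℝ), mul_assoc,
    inv_mul_cancel₀ sqrt2pi_pos.ne', mul_one]



section pi
variable {d : ℕ}

local notation "γ" => gaussianReal 0 1
local notation "πd" => (Measure.pi fun _ : Fin d => gaussianReal 0 1)

lemma piSingle_int (g : ℝ → ℝ) (hg : Integrable g γ) (i : Fin d) :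
    Integrable (fun x : Fin d → ℝ => g (x i)) πd := by
  letI : MeasureSpace ℝ := ⟨γ⟩
  haveI : SigmaFinite (volume : Measure ℝ) := inferInstanceAs (SigmaFinite γ)
  haveI : IsProbabilityMeasure (volume : Measure ℝ) := inferInstanceAs (IsProbabilityMeasure γ)
  have key : Integrable (fun x : Fin d → ℝ =>
      ∏ k, (if k = i then g else fun _ => (1:ℝ)) (x k)) (volume : Measure (Fin d → ℝ)) := by
    refine Integrable.fintype_prod (𝕜 := ℝ) fun k => ?_
    by_cases h : k = i
    · rw [if_pos h]; exact hg
    · rw [if_neg h]; exact integrable_const 1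
  have he : (fun x : Fin d → ℝ => ∏ k, (if k = i then g else fun _ => (1:ℝ)) (x k))
      = fun x : Fin d → ℝ => g (x i) := by
    funext x
    rw [Finset.prod_eq_single i (fun b _ hb => by simp [hb]) (by simp)]
    simp
  rw [he] at key
  exact key

lemma piSingle_val (g : ℝ → ℝ) (i : Fin d) :
    ∫ x : Fin d → ℝ, g (x i) ∂πd = ∫ t, g t ∂γ := by
  letI : MeasureSpace ℝ := ⟨γ⟩
  haveI : SigmaFinite (volume : Measure ℝ) := inferInstanceAs (SigmaFinite γ)
  haveI : IsProbabilityMeasure (volume : Measure ℝ) := inferInstanceAs (IsProbabilityMeasure γ)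
  have key := MeasureTheory.integral_fintype_prod_eq_prod (𝕜 := ℝ) (μ := fun _ => volume)
    (f := fun k => if k = i then g else fun _ => (1:ℝ))
  have he : (fun x : Fin d → ℝ => ∏ k, (if k = i then g else fun _ => (1:ℝ)) (x k))
      = fun x : Fin d → ℝ => g (x i) := by
    funext x
    rw [Finset.prod_eq_single i (fun b _ hb => by simp [hb]) (by simp)]
    simp
  rw [he] at key
  calc ∫ x : Fin d → ℝ, g (x i) ∂πd = ∫ x : Fin d → ℝ, g (x i) := rfl
    _ = ∏ k, ∫ x : ℝ, (if k = i then g else fun _ => (1:ℝ)) x := key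
    _ = ∫ x : ℝ, g x := by
        rw [Finset.prod_eq_single i (fun b _ hb => by simp [hb]) (by simp)]
        simp
    _ = ∫ t, g t ∂γ := rfl

lemma piPair_int (g h : ℝ → ℝ) (hg : Integrable g γ) (hh : Integrable h γ)
    {i j : Fin d} (hij : i ≠ j) :
    Integrable (fun x : Fin d → ℝ => g (x i) * h (x j)) πd := by
  letI : MeasureSpace ℝ := ⟨γ⟩
  haveI : SigmaFinite (volume : Measure ℝ) := inferInstanceAs (SigmaFinite γ)
  haveI : IsProbabilityMeasure (volume : Measure ℝ) := inferInstanceAs (IsProbabilityMeasure γ)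
  have key : Integrable (fun x : Fin d → ℝ =>
      ∏ k, (if k = i then g else if k = j then h else fun _ => (1:ℝ)) (x k))
      (volume : Measure (Fin d → ℝ)) := by
    refine Integrable.fintype_prod (𝕜 := ℝ) fun k => ?_
    by_cases h1 : k = i
    · rw [if_pos h1]; exact hg
    · rw [if_neg h1]
      by_cases h2 : k = j
      · rw [if_pos h2]; exact hh
      · rw [if_neg h2]; exact integrable_const 1
  have hout : ∀ k ∈ Finset.univ, k ∉ ({i, j} : Finset (Fin d)) →
      (if k = i then g else if k = j then h else fun _ => (1:ℝ)) = fun _ => (1:ℝ) := by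
    intro k _ hk
    simp only [Finset.mem_insert, Finset.mem_singleton, not_or] at hk
    rw [if_neg hk.1, if_neg hk.2]
  have he : (fun x : Fin d → ℝ =>
      ∏ k, (if k = i then g else if k = j then h else fun _ => (1:ℝ)) (x k))
      = fun x : Fin d → ℝ => g (x i) * h (x j) := by
    funext x
    rw [← Finset.prod_subset (Finset.subset_univ ({i, j} : Finset (Fin d)))
        (fun k hu hk => by rw [hout k hu hk]), Finset.prod_pair hij]
    rw [if_pos rfl, if_neg (Ne.symm hij), if_pos rfl]
  rw [he] at key
  exact key

lemma piPair_val (g h : ℝ → ℝ) {i j : Fin d} (hij : i ≠ j) :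
    ∫ x : Fin d → ℝ, g (x i) * h (x j) ∂πd = (∫ t, g t ∂γ) * ∫ t, h t ∂γ := by
  letI : MeasureSpace ℝ := ⟨γ⟩
  haveI : SigmaFinite (volume : Measure ℝ) := inferInstanceAs (SigmaFinite γ)
  haveI : IsProbabilityMeasure (volume : Measure ℝ) := inferInstanceAs (IsProbabilityMeasure γ)
  have key := MeasureTheory.integral_fintype_prod_eq_prod (𝕜 := ℝ) (μ := fun _ => volume)
    (f := fun k => if k = i then g else if k = j then h else fun _ => (1:ℝ))
  have hout : ∀ k ∈ Finset.univ, k ∉ ({i, j} : Finset (Fin d)) →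
      (if k = i then g else if k = j then h else fun _ => (1:ℝ)) = fun _ => (1:ℝ) := by
    intro k _ hk
    simp only [Finset.mem_insert, Finset.mem_singleton, not_or] at hk
    rw [if_neg hk.1, if_neg hk.2]
  have he : (fun x : Fin d → ℝ =>
      ∏ k, (if k = i then g else if k = j then h else fun _ => (1:ℝ)) (x k))
      = fun x : Fin d → ℝ => g (x i) * h (x j) := by
    funext x
    rw [← Finset.prod_subset (Finset.subset_univ ({i, j} : Finset (Fin d)))
        (fun k hu hk => by rw [hout k hu hk]), Finset.prod_pair hij]
    rw [if_pos rfl, if_neg (Ne.symm hij), if_pos rfl]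
  rw [he] at key
  calc ∫ x : Fin d → ℝ, g (x i) * h (x j) ∂πd
      = ∫ x : Fin d → ℝ, g (x i) * h (x j) := rfl
    _ = ∏ k, ∫ x : ℝ, (if k = i then g else if k = j then h else fun _ => (1:ℝ)) x := key
    _ = (∫ t, g t ∂γ) * ∫ t, h t ∂γ := by
        rw [← Finset.prod_subset (Finset.subset_univ ({i, j} : Finset (Fin d)))
          (fun k hu hk => by rw [hout k hu hk]; simp), Finset.prod_pair hij]
        rw [if_pos rfl, if_neg (Ne.symm hij), if_pos rfl]
        rfl

end pi



section moments
variable {d : ℕ}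

local notation "γ" => gaussianReal 0 1
local notation "πd" => (Measure.pi fun _ : Fin d => gaussianReal 0 1)

def sqNorm (d : ℕ) (x : Fin d → ℝ) : ℝ := ∑ i, x i ^ 2

lemma NInt : Integrable (sqNorm d) πd := by
  unfold sqNorm
  exact integrable_finset_sum _ fun i _ => piSingle_int (fun t => t ^ 2) (grIntPow 2) i

lemma NVal : ∫ x, sqNorm d x ∂πd = d := by
  unfold sqNorm
  rw [integral_finset_sum _ fun i _ => piSingle_int (fun t => t ^ 2) (grIntPow 2) i]
  simp [piSingle_val (fun t => t ^ 2), grM2]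

lemma pairMomInt (i j : Fin d) :
    Integrable (fun x : Fin d → ℝ => x i ^ 2 * x j ^ 2) πd := by
  by_cases h : j = i
  · subst h
    have : (fun x : Fin d → ℝ => x j ^ 2 * x j ^ 2) = fun x => (fun t : ℝ => t ^ 4) (x j) := by
      funext x; ring
    rw [this]
    exact piSingle_int _ (grIntPow 4) j
  · exact piPair_int _ _ (grIntPow 2) (grIntPow 2) (Ne.symm h)

lemma pairMomVal (i j : Fin d) :
    ∫ x : Fin d → ℝ, x i ^ 2 * x j ^ 2 ∂πd = if j = i then 3 else 1 := by
  by_cases h : j = i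
  · subst h
    have : (fun x : Fin d → ℝ => x j ^ 2 * x j ^ 2) = fun x => (fun t : ℝ => t ^ 4) (x j) := by
      funext x; ring
    rw [if_pos rfl, this, piSingle_val (fun t => t ^ 4), grM4]
  · rw [if_neg h]
    have := piPair_val (d := d) (fun t => t ^ 2) (fun t => t ^ 2) (Ne.symm h)
    simpa [grM2] using this

lemma qInt (i : Fin d) : Integrable (fun x => x i ^ 2 * sqNorm d x) πd := by
  have h1 : (fun x : Fin d → ℝ => x i ^ 2 * sqNorm d x)
      = fun x => ∑ j, x i ^ 2 * x j ^ 2 := by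
    funext x; unfold sqNorm; rw [Finset.mul_sum]
  rw [h1]
  exact integrable_finset_sum _ fun j _ => pairMomInt i j

lemma qVal (i : Fin d) : ∫ x, x i ^ 2 * sqNorm d x ∂πd = d + 2 := by
  have h1 : (fun x : Fin d → ℝ => x i ^ 2 * sqNorm d x)
      = fun x => ∑ j, x i ^ 2 * x j ^ 2 := by
    funext x; unfold sqNorm; rw [Finset.mul_sum]
  rw [h1, integral_finset_sum _ fun j _ => pairMomInt i j]
  have h2 : ∀ j : Fin d, ∫ x : Fin d → ℝ, x i ^ 2 * x j ^ 2 ∂πd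
      = 1 + (if j = i then (2:ℝ) else 0) := by
    intro j
    rw [pairMomVal i j]
    split <;> norm_num
  simp only [h2]
  rw [Finset.sum_add_distrib, Finset.sum_const, Finset.sum_ite_eq' Finset.univ i fun _ => (2:ℝ)]
  simp [mul_comm]

lemma cInt (i : Fin d) : Integrable (fun x => x i * sqNorm d x) πd := by
  have h1 : (fun x : Fin d → ℝ => x i * sqNorm d x)
      = fun x => ∑ j, x i * x j ^ 2 := by
    funext x; unfold sqNorm; rw [Finset.mul_sum]
  rw [h1]
  refine integrable_finset_sum _ fun j _ => ?_
  by_cases h : j = i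
  · subst h
    have : (fun x : Fin d → ℝ => x j * x j ^ 2) = fun x => (fun t : ℝ => t ^ 3) (x j) := by
      funext x; ring
    rw [this]
    exact piSingle_int _ (grIntPow 3) j
  · have : (fun x : Fin d → ℝ => x i * x j ^ 2)
        = fun x => (fun t : ℝ => t) (x i) * (fun t : ℝ => t ^ 2) (x j) := rfl
    rw [this]
    exact piPair_int _ _ (by simpa using grIntPow 1) (grIntPow 2) (Ne.symm h)

lemma idInt (i : Fin d) : Integrable (fun x : Fin d → ℝ => x i) πd :=
  piSingle_int (fun t => t) (by simpa using grIntPow 1) i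

lemma idVal (i : Fin d) : ∫ x : Fin d → ℝ, x i ∂πd = 0 := by
  rw [piSingle_val (fun t => t) i]; exact grM1

lemma sqInt (i : Fin d) : Integrable (fun x : Fin d → ℝ => x i ^ 2) πd :=
  piSingle_int (fun t => t ^ 2) (grIntPow 2) i

lemma sqVal (i : Fin d) : ∫ x : Fin d → ℝ, x i ^ 2 ∂πd = 1 := by
  rw [piSingle_val (fun t => t ^ 2) i]; exact grM2

end moments



variable {d : ℕ}

section prodsec
variable {d : ℕ}

local notation "πd" => (Measure.pi fun _ : Fin d => gaussianReal 0 1)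

lemma m_decomp (i : Fin d) :
    (fun p : (Fin d → ℝ) × (Fin d → ℝ) => (p.1 i - p.2 i) ^ 2 * sqNorm d p.1)
    = fun p => ((fun x => x i ^ 2 * sqNorm d x) p.1 * (fun _ => (1:ℝ)) p.2)
        - ((fun x => 2 * (x i * sqNorm d x)) p.1 * (fun y : Fin d → ℝ => y i) p.2)
        + ((fun x => sqNorm d x) p.1 * (fun y : Fin d → ℝ => y i ^ 2) p.2) := by
  funext p
  simp only
  ring

lemma mInt (i : Fin d) :
    Integrable (fun p : (Fin d → ℝ) × (Fin d → ℝ) => (p.1 i - p.2 i) ^ 2 * sqNorm d p.1) ((Measure.pi fun _ : Fin d => gaussianReal 0 1).prod (Measure.pi fun _ : Fin d => gaussianReal 0 1)) := by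
  rw [m_decomp i]
  exact (((qInt i).mul_prod (integrable_const 1)).sub
    (((cInt i).const_mul 2).mul_prod (idInt i))).add (NInt.mul_prod (sqInt i))

lemma mVal (i : Fin d) :
    ∫ p : (Fin d → ℝ) × (Fin d → ℝ), (p.1 i - p.2 i) ^ 2 * sqNorm d p.1 ∂((Measure.pi fun _ : Fin d => gaussianReal 0 1).prod (Measure.pi fun _ : Fin d => gaussianReal 0 1))
      = 2 * d + 2 := by
  have hA : Integrable (fun p : (Fin d → ℝ) × (Fin d → ℝ) =>
      (fun x => x i ^ 2 * sqNorm d x) p.1 * (fun _ : Fin d → ℝ => (1:ℝ)) p.2) ((Measure.pi fun _ : Fin d => gaussianReal 0 1).prod (Measure.pi fun _ : Fin d => gaussianReal 0 1)) :=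
    (qInt i).mul_prod (integrable_const 1)
  have hB : Integrable (fun p : (Fin d → ℝ) × (Fin d → ℝ) =>
      (fun x => 2 * (x i * sqNorm d x)) p.1 * (fun y : Fin d → ℝ => y i) p.2) ((Measure.pi fun _ : Fin d => gaussianReal 0 1).prod (Measure.pi fun _ : Fin d => gaussianReal 0 1)) :=
    ((cInt i).const_mul 2).mul_prod (idInt i)
  have hC : Integrable (fun p : (Fin d → ℝ) × (Fin d → ℝ) =>
      (fun x => sqNorm d x) p.1 * (fun y : Fin d → ℝ => y i ^ 2) p.2) ((Measure.pi fun _ : Fin d => gaussianReal 0 1).prod (Measure.pi fun _ : Fin d => gaussianReal 0 1)) :=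
    NInt.mul_prod (sqInt i)
  have hAB : Integrable (fun p : (Fin d → ℝ) × (Fin d → ℝ) =>
      (fun x => x i ^ 2 * sqNorm d x) p.1 * (fun _ : Fin d → ℝ => (1:ℝ)) p.2
      - (fun x => 2 * (x i * sqNorm d x)) p.1 * (fun y : Fin d → ℝ => y i) p.2) ((Measure.pi fun _ : Fin d => gaussianReal 0 1).prod (Measure.pi fun _ : Fin d => gaussianReal 0 1)) :=
    hA.sub hB
  have vA : ∫ p : (Fin d → ℝ) × (Fin d → ℝ), (fun x => x i ^ 2 * sqNorm d x) p.1 * (fun _ : Fin d → ℝ => (1:ℝ)) p.2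
      ∂((Measure.pi fun _ : Fin d => gaussianReal 0 1).prod (Measure.pi fun _ : Fin d => gaussianReal 0 1)) = (d + 2 : ℝ) := by
    have h := integral_prod_mul (μ := (Measure.pi fun _ : Fin d => gaussianReal 0 1))
      (ν := (Measure.pi fun _ : Fin d => gaussianReal 0 1))
      (fun x => x i ^ 2 * sqNorm d x) (fun _ : Fin d → ℝ => (1:ℝ))
    rw [h, qVal i]
    simp
  have vB : ∫ p : (Fin d → ℝ) × (Fin d → ℝ), (fun x => 2 * (x i * sqNorm d x)) p.1 * (fun y : Fin d → ℝ => y i) p.2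
      ∂((Measure.pi fun _ : Fin d => gaussianReal 0 1).prod (Measure.pi fun _ : Fin d => gaussianReal 0 1)) = 0 := by
    have h := integral_prod_mul (μ := (Measure.pi fun _ : Fin d => gaussianReal 0 1))
      (ν := (Measure.pi fun _ : Fin d => gaussianReal 0 1))
      (fun x => 2 * (x i * sqNorm d x)) (fun y : Fin d → ℝ => y i)
    rw [h, idVal i, mul_zero]
  have vC : ∫ p : (Fin d → ℝ) × (Fin d → ℝ), (fun x => sqNorm d x) p.1 * (fun y : Fin d → ℝ => y i ^ 2) p.2
      ∂((Measure.pi fun _ : Fin d => gaussianReal 0 1).prod (Measure.pi fun _ : Fin d => gaussianReal 0 1)) = (d : ℝ) := by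
    have h := integral_prod_mul (μ := (Measure.pi fun _ : Fin d => gaussianReal 0 1))
      (ν := (Measure.pi fun _ : Fin d => gaussianReal 0 1))
      (fun x => sqNorm d x) (fun y : Fin d → ℝ => y i ^ 2)
    rw [h, NVal, sqVal i, mul_one]
  rw [m_decomp i, integral_add hAB hC, integral_sub hA hB, vA, vB, vC]
  ring

lemma MInt : Integrable
    (fun p : (Fin d → ℝ) × (Fin d → ℝ) => (∑ i, (p.1 i - p.2 i) ^ 2) * sqNorm d p.1) ((Measure.pi fun _ : Fin d => gaussianReal 0 1).prod (Measure.pi fun _ : Fin d => gaussianReal 0 1)) := by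
  have h : (fun p : (Fin d → ℝ) × (Fin d → ℝ) => (∑ i, (p.1 i - p.2 i) ^ 2) * sqNorm d p.1)
      = fun p => ∑ i, (p.1 i - p.2 i) ^ 2 * sqNorm d p.1 := by
    funext p; rw [Finset.sum_mul]
  rw [h]
  exact integrable_finset_sum _ fun i _ => mInt i

lemma MVal : ∫ p : (Fin d → ℝ) × (Fin d → ℝ),
      (∑ i, (p.1 i - p.2 i) ^ 2) * sqNorm d p.1 ∂((Measure.pi fun _ : Fin d => gaussianReal 0 1).prod (Measure.pi fun _ : Fin d => gaussianReal 0 1)) = 2 * d ^ 2 + 2 * d := by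
  have h : (fun p : (Fin d → ℝ) × (Fin d → ℝ) => (∑ i, (p.1 i - p.2 i) ^ 2) * sqNorm d p.1)
      = fun p => ∑ i, (p.1 i - p.2 i) ^ 2 * sqNorm d p.1 := by
    funext p; rw [Finset.sum_mul]
  rw [h, integral_finset_sum _ fun i _ => mInt i]
  simp only [mVal]
  rw [Finset.sum_const, Finset.card_univ, Fintype.card_fin]
  push_cast
  ring

lemma NfstInt : Integrable (fun p : (Fin d → ℝ) × (Fin d → ℝ) => sqNorm d p.1) ((Measure.pi fun _ : Fin d => gaussianReal 0 1).prod (Measure.pi fun _ : Fin d => gaussianReal 0 1)) := by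
  have h : (fun p : (Fin d → ℝ) × (Fin d → ℝ) => sqNorm d p.1)
      = fun p => sqNorm d p.1 * (fun _ : Fin d → ℝ => (1:ℝ)) p.2 := by
    funext p; simp
  rw [h]
  exact NInt.mul_prod (integrable_const 1)

lemma NfstVal : ∫ p : (Fin d → ℝ) × (Fin d → ℝ), sqNorm d p.1 ∂((Measure.pi fun _ : Fin d => gaussianReal 0 1).prod (Measure.pi fun _ : Fin d => gaussianReal 0 1)) = d := by
  have h : (fun p : (Fin d → ℝ) × (Fin d → ℝ) => sqNorm d p.1)
      = fun p => (fun x => sqNorm d x) p.1 * (fun _ : Fin d → ℝ => (1:ℝ)) p.2 := by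
    funext p; simp
  rw [h]
  have h2 := integral_prod_mul (μ := (Measure.pi fun _ : Fin d => gaussianReal 0 1))
    (ν := (Measure.pi fun _ : Fin d => gaussianReal 0 1))
    (fun x => sqNorm d x) (fun _ : Fin d → ℝ => (1:ℝ))
  rw [h2, NVal]
  simp

end prodsec


noncomputable def stdGaussian (d : ℕ) : Measure (EuclideanSpace ℝ (Fin d)) :=
  (Measure.pi fun _ : Fin d => gaussianReal 0 1).map
    ⇑(EuclideanSpace.equiv (Fin d) ℝ).symm

/-- Second-moment bound for the deterministic residual-feedback estimator,
with the two Gaussian perturbations `u_t, u_{t-1}` independent (modeled via the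
product of two standard Gaussian measures). -/
theorem residual_feedback_second_moment
    (d : ℕ) (f : EuclideanSpace ℝ (Fin d) → ℝ) (L₀ δ : ℝ) (hδ : 0 < δ)
    (hf : ∀ x y, |f x - f y| ≤ L₀ * ‖x - y‖)
    (xt xprev : EuclideanSpace ℝ (Fin d)) :
    ∫ p : EuclideanSpace ℝ (Fin d) × EuclideanSpace ℝ (Fin d),
        ‖(δ⁻¹ * (f (xt + δ • p.1) - f (xprev + δ • p.2))) • p.1‖ ^ 2
        ∂((stdGaussian d).prod (stdGaussian d)) ≤
      2 * d * L₀ ^ 2 / δ ^ 2 * ‖xt - xprev‖ ^ 2 + 8 * L₀ ^ 2 * ((d : ℝ) + 4) ^ 2 := by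
  set me : (Fin d → ℝ) ≃ᵐ EuclideanSpace ℝ (Fin d) :=
    (EuclideanSpace.equiv (Fin d) ℝ).symm.toHomeomorph.toMeasurableEquiv with hme
  set π' : Measure (Fin d → ℝ) := Measure.pi fun _ : Fin d => gaussianReal 0 1 with hπ'
  have hμ : stdGaussian d = π'.map me := rfl
  have hprod : (stdGaussian d).prod (stdGaussian d)
      = (π'.prod π').map (me.prodCongr me) := by
    rw [hμ, Measure.map_prod_map _ _ me.measurable me.measurable]
    rfl
  rw [hprod, MeasureTheory.integral_map_equiv]
  -- abbreviations
  set c1 : ℝ := 2 * L₀ ^ 2 * δ⁻¹ ^ 2 * ‖xt - xprev‖ ^ 2 with hc1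
  have hnorm2 : ∀ y : EuclideanSpace ℝ (Fin d), ‖y‖ ^ 2 = ∑ i, (y i) ^ 2 := by
    intro y
    rw [EuclideanSpace.norm_eq, Real.sq_sqrt (by positivity)]
    congr 1
    funext i
    rw [Real.norm_eq_abs, sq_abs]
  have hGle : ∀ p : (Fin d → ℝ) × (Fin d → ℝ),
      ‖(δ⁻¹ * (f (xt + δ • (me.prodCongr me p).1) - f (xprev + δ • (me.prodCongr me p).2)))
        • (me.prodCongr me p).1‖ ^ 2
      ≤ c1 * sqNorm d p.1 + 2 * L₀ ^ 2 * ((∑ i, (p.1 i - p.2 i) ^ 2) * sqNorm d p.1) := by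
    rintro ⟨u, v⟩
    have hpc : (me.prodCongr me (u, v)) = (me u, me v) := rfl
    rw [hpc]
    set a : ℝ := f (xt + δ • me u) - f (xprev + δ • me u) with ha
    set b : ℝ := f (xprev + δ • me u) - f (xprev + δ • me v) with hb
    have hNu : ‖(me u : EuclideanSpace ℝ (Fin d))‖ ^ 2 = sqNorm d u := by
      rw [hnorm2]; rfl
    have hNuv : ‖(me u : EuclideanSpace ℝ (Fin d)) - me v‖ ^ 2 = ∑ i, (u i - v i) ^ 2 := by
      rw [hnorm2]
      refine Finset.sum_congr rfl fun i _ => ?_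
      congr 1
    have ha2 : a ^ 2 ≤ L₀ ^ 2 * ‖xt - xprev‖ ^ 2 := by
      have h1 := hf (xt + δ • me u) (xprev + δ • me u)
      rw [add_sub_add_right_eq_sub] at h1
      calc a ^ 2 = |a| ^ 2 := (sq_abs a).symm
        _ ≤ (L₀ * ‖xt - xprev‖) ^ 2 := by
            apply pow_le_pow_left₀ (abs_nonneg a) h1
        _ = L₀ ^ 2 * ‖xt - xprev‖ ^ 2 := by ring
    have hb2 : b ^ 2 ≤ L₀ ^ 2 * δ ^ 2 * ∑ i, (u i - v i) ^ 2 := by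
      have h1 := hf (xprev + δ • me u) (xprev + δ • me v)
      have h2 : (xprev + δ • me u) - (xprev + δ • me v) = δ • (me u - me v) := by
        rw [smul_sub]; abel
      rw [h2, norm_smul, Real.norm_eq_abs, abs_of_pos hδ] at h1
      calc b ^ 2 = |b| ^ 2 := (sq_abs b).symm
        _ ≤ (L₀ * (δ * ‖me u - me v‖)) ^ 2 := by
            apply pow_le_pow_left₀ (abs_nonneg b) h1
        _ = L₀ ^ 2 * δ ^ 2 * ‖(me u : EuclideanSpace ℝ (Fin d)) - me v‖ ^ 2 := by ring
        _ = L₀ ^ 2 * δ ^ 2 * ∑ i, (u i - v i) ^ 2 := by rw [hNuv]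
    have hab : f (xt + δ • me u) - f (xprev + δ • me v) = a + b := by
      rw [ha, hb]; ring
    have hNu0 : (0:ℝ) ≤ sqNorm d u := Finset.sum_nonneg fun i _ => sq_nonneg _
    have hS0 : (0:ℝ) ≤ ∑ i, (u i - v i) ^ 2 := Finset.sum_nonneg fun i _ => sq_nonneg _
    have hsum : (a + b) ^ 2 ≤ 2 * L₀ ^ 2 * ‖xt - xprev‖ ^ 2
        + 2 * L₀ ^ 2 * δ ^ 2 * ∑ i, (u i - v i) ^ 2 := by
      nlinarith [sq_nonneg (a - b), ha2, hb2]
    have hln : ‖(δ⁻¹ * (f (xt + δ • me u) - f (xprev + δ • me v))) • (me u : EuclideanSpace ℝ (Fin d))‖ ^ 2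
        = δ⁻¹ ^ 2 * (a + b) ^ 2 * sqNorm d u := by
      rw [norm_smul, Real.norm_eq_abs, mul_pow, sq_abs, hNu, hab]
      ring
    rw [hln]
    have step : δ⁻¹ ^ 2 * (a + b) ^ 2 * sqNorm d u
        ≤ δ⁻¹ ^ 2 * (2 * L₀ ^ 2 * ‖xt - xprev‖ ^ 2
            + 2 * L₀ ^ 2 * δ ^ 2 * ∑ i, (u i - v i) ^ 2) * sqNorm d u := by
      apply mul_le_mul_of_nonneg_right _ hNu0
      exact mul_le_mul_of_nonneg_left hsum (sq_nonneg _)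
    refine step.trans (le_of_eq ?_)
    rw [hc1]
    field_simp
  have hGint : Integrable (fun p : (Fin d → ℝ) × (Fin d → ℝ) =>
      c1 * sqNorm d p.1 + 2 * L₀ ^ 2 * ((∑ i, (p.1 i - p.2 i) ^ 2) * sqNorm d p.1))
      (π'.prod π') := (NfstInt.const_mul c1).add (MInt.const_mul (2 * L₀ ^ 2))
  have hmono := integral_mono_of_nonneg
    (f := fun p : (Fin d → ℝ) × (Fin d → ℝ) =>
      ‖(δ⁻¹ * (f (xt + δ • (me.prodCongr me p).1) - f (xprev + δ • (me.prodCongr me p).2)))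
        • (me.prodCongr me p).1‖ ^ 2)
    (μ := π'.prod π')
    (Filter.Eventually.of_forall fun p => by positivity) hGint
    (Filter.Eventually.of_forall hGle)
  refine hmono.trans ?_
  have hval : ∫ p : (Fin d → ℝ) × (Fin d → ℝ),
      (c1 * sqNorm d p.1 + 2 * L₀ ^ 2 * ((∑ i, (p.1 i - p.2 i) ^ 2) * sqNorm d p.1))
      ∂(π'.prod π') = c1 * d + 2 * L₀ ^ 2 * (2 * d ^ 2 + 2 * d) := by
    rw [integral_add (NfstInt.const_mul c1) (MInt.const_mul (2 * L₀ ^ 2)),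
      integral_const_mul, integral_const_mul, NfstVal, MVal]
  rw [hval]
  have h1 : c1 * d = 2 * d * L₀ ^ 2 / δ ^ 2 * ‖xt - xprev‖ ^ 2 := by
    rw [hc1]
    field_simp
  have h2 : 2 * L₀ ^ 2 * (2 * (d:ℝ) ^ 2 + 2 * d) ≤ 8 * L₀ ^ 2 * ((d : ℝ) + 4) ^ 2 := by
    nlinarith [sq_nonneg L₀, Nat.cast_nonneg (α := ℝ) d, sq_nonneg ((d:ℝ))]
  linarith [h1, h2]
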